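/- Let (X,d) be a metric space. The following are equivalent: (a) (X,d) is a UC space, i.e., every continuous real-valued function on X is uniformly continuous; (b) for every metric space (Y,ρ), every continuous function f : (X,d) → (Y,ρ) is strongly uniformly continuous on each subset of X; (c) for every metric space (Y,ρ), every continuous function f : (X,d) → (Y,ρ) is strongly uniformly continuous on each closed subset of X. -/

import Mathlib

universe u v

/-- `f` is strongly uniformly continuous on `B` if for every `ε > 0` there is a `δ > 0` such
that whenever `dist x y < δ` and `{x, y} ∩ B ≠ ∅`, we have `dist (f x) (f y) < ε`. -/
def StrongUnifContOn {X : Type u} {Y : Type v} [MetricSpace X] [MetricSpace Y]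
    (f : X → Y) (B : Set X) : Prop :=
  ∀ ε > (0 : ℝ), ∃ δ > (0 : ℝ), ∀ x y : X,
    dist x y < δ → (x ∈ B ∨ y ∈ B) → dist (f x) (f y) < ε

/-- In a UC space, every continuous map into any metric space is uniformly continuous. -/
theorem uc_key {X : Type u} [MetricSpace X]
    (h : ∀ f : X → ℝ, Continuous f → UniformContinuous f)
    {Y : Type v} [MetricSpace Y] (f : X → Y) (hf : Continuous f) :
    UniformContinuous f := by
  by_contra hnu
  rw [Metric.uniformContinuous_iff] at hnu
  push_neg at hnu
  obtain ⟨ε, εpos, hε⟩ := hnu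
  have hseq : ∀ n : ℕ, ∃ a b : X, dist a b < 1 / (n + 1) ∧ ε ≤ dist (f a) (f b) := by
    intro n
    obtain ⟨a, b, hab, hfab⟩ := hε (1 / (n + 1)) (by positivity)
    exact ⟨a, b, hab, hfab⟩
  choose x y hxy hfxy using hseq
  -- Step 1: both sequences are eventually bounded away from every point.
  have step1 : ∀ p : X, ∃ r > (0 : ℝ), ∃ N : ℕ, ∀ n, N ≤ n →
      r ≤ dist (x n) p ∧ r ≤ dist (y n) p := by
    intro p
    obtain ⟨δ, δpos, hδ⟩ := Metric.continuous_iff.mp hf p (ε / 2) (by linarith)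
    obtain ⟨N, hN⟩ := exists_nat_gt (2 / δ)
    refine ⟨δ / 2, by linarith, N, fun n hn => ?_⟩
    have hn1 : (2 : ℝ) / δ < n + 1 := by
      calc (2 : ℝ) / δ < N := hN
        _ ≤ n := by exact_mod_cast hn
        _ ≤ n + 1 := by linarith
    have hsmall : (1 : ℝ) / (n + 1) < δ / 2 := by
      rw [div_lt_div_iff₀ (by positivity) (by norm_num)]
      rw [div_lt_iff₀ δpos] at hn1
      nlinarith
    have key : ¬ (dist (x n) p < δ ∧ dist (y n) p < δ) := by
      rintro ⟨h1, h2⟩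
      have hx' := hδ (x n) h1
      have hy' := hδ (y n) h2
      have : dist (f (x n)) (f (y n)) < ε := by
        calc dist (f (x n)) (f (y n)) ≤ dist (f (x n)) (f p) + dist (f p) (f (y n)) :=
              dist_triangle _ _ _
          _ < ε / 2 + ε / 2 := by rw [dist_comm (f p)]; linarith
          _ = ε := by ring
      exact absurd (hfxy n) (not_le.mpr this)
    constructor
    · by_contra hc
      push_neg at hc
      refine key ⟨by linarith, ?_⟩
      calc dist (y n) p ≤ dist (y n) (x n) + dist (x n) p := dist_triangle _ _ _
        _ < 1 / (n + 1) + δ / 2 := by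
            rw [dist_comm]; exact add_lt_add (hxy n) hc
        _ < δ / 2 + δ / 2 := by linarith
        _ = δ := by ring
    · by_contra hc
      push_neg at hc
      refine key ⟨?_, by linarith⟩
      calc dist (x n) p ≤ dist (x n) (y n) + dist (y n) p := dist_triangle _ _ _
        _ < 1 / (n + 1) + δ / 2 := add_lt_add (hxy n) hc
        _ < δ / 2 + δ / 2 := by linarith
        _ = δ := by ring
  choose r rpos N hN using step1
  -- Step 2: extract a subsequence so the x-points and y-points form disjoint closed sets.
  obtain ⟨nn, hnn0, hnnS⟩ : ∃ nn : ℕ → ℕ, nn 0 = 0 ∧ ∀ k,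
      nn (k + 1) = max (nn k + 1) (max (N (x (nn k))) (N (y (nn k)))) :=
    ⟨fun k => Nat.rec 0 (fun _ prev => max (prev + 1) (max (N (x prev)) (N (y prev)))) k,
      rfl, fun _ => rfl⟩
  have hmono : StrictMono nn := by
    apply strictMono_nat_of_lt_succ
    intro k
    rw [hnnS]
    exact lt_of_lt_of_le (Nat.lt_succ_self _) (le_max_left _ _)
  have hK : ∀ j k, j < k → N (x (nn j)) ≤ nn k ∧ N (y (nn j)) ≤ nn k := by
    intro j k hjk
    have h1 : nn (j + 1) ≤ nn k := hmono.monotone hjk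
    rw [hnnS] at h1
    constructor
    · exact le_trans (le_trans (le_max_left _ _) (le_max_right _ _)) h1
    · exact le_trans (le_trans (le_max_right _ _) (le_max_right _ _)) h1
  -- separation facts
  have sepx : ∀ j k, j < k →
      r (x (nn j)) ≤ dist (x (nn k)) (x (nn j)) ∧ r (x (nn j)) ≤ dist (y (nn k)) (x (nn j)) :=
    fun j k hjk => hN (x (nn j)) (nn k) (hK j k hjk).1
  have sepy : ∀ j k, j < k →
      r (y (nn j)) ≤ dist (x (nn k)) (y (nn j)) ∧ r (y (nn j)) ≤ dist (y (nn k)) (y (nn j)) :=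
    fun j k hjk => hN (y (nn j)) (nn k) (hK j k hjk).2
  set A : Set X := Set.range (fun k => x (nn k)) with hA_def
  set B : Set X := Set.range (fun k => y (nn k)) with hB_def
  have hxney : ∀ k, x (nn k) ≠ y (nn k) := by
    intro k hxyeq
    have := hfxy (nn k)
    rw [hxyeq, dist_self] at this
    linarith
  have hdisj : Disjoint A B := by
    rw [Set.disjoint_left]
    rintro q ⟨j, rfl⟩ ⟨k, hk⟩
    have hk' : y (nn k) = x (nn j) := hk
    rcases lt_trichotomy j k with hjk | hjk | hjk
    · have := (sepx j k hjk).2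
      rw [hk', dist_self] at this
      exact absurd this (not_le.mpr (rpos _))
    · subst hjk
      exact hxney j hk'.symm
    · have := (sepy k j hjk).1
      rw [← hk', dist_self] at this
      exact absurd this (not_le.mpr (rpos _))
  -- both sets are closed
  have hclosed : ∀ z : ℕ → X, (∀ p : X, ∀ m, N p ≤ m → r p ≤ dist (z m) p) →
      IsClosed (Set.range (fun k => z (nn k))) := by
    intro z hz
    rw [← isOpen_compl_iff, Metric.isOpen_iff]
    intro p hp
    have hne : ∀ k, z (nn k) ≠ p := by
      intro k hk
      exact hp ⟨k, hk⟩
    obtain ⟨ρ, hρpos, hρrp, hρle⟩ :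
        ∃ ρ > (0 : ℝ), ρ ≤ r p ∧ ∀ k < N p, ρ ≤ dist (z (nn k)) p := by
      classical
      let F : Finset ℝ :=
        insert (r p) ((Finset.range (N p)).image (fun k => dist (z (nn k)) p))
      have hFne : F.Nonempty := ⟨r p, Finset.mem_insert_self _ _⟩
      refine ⟨F.min' hFne, ?_, F.min'_le _ (Finset.mem_insert_self _ _),
        fun k hk => F.min'_le _
          (Finset.mem_insert_of_mem (Finset.mem_image.mpr ⟨k, Finset.mem_range.mpr hk, rfl⟩))⟩
      rw [gt_iff_lt, Finset.lt_min'_iff]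
      intro b hb
      rcases Finset.mem_insert.mp hb with h1 | h1
      · rw [h1]; exact rpos p
      · obtain ⟨k, _, hk⟩ := Finset.mem_image.mp h1
        rw [← hk]
        exact dist_pos.mpr (hne k)
    refine ⟨ρ, hρpos, fun q hq hq' => ?_⟩
    obtain ⟨k, hk⟩ := hq'
    rw [Metric.mem_ball] at hq
    have hk' : z (nn k) = q := hk
    rcases lt_or_ge k (N p) with hkN | hkN
    · have := hρle k hkN
      rw [hk'] at this
      exact absurd hq (not_lt.mpr this)
    · have hm : N p ≤ nn k := le_trans hkN (hmono.le_apply)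
      have := hz p (nn k) hm
      rw [hk'] at this
      exact absurd hq (not_lt.mpr (le_trans hρrp this))
  have hAclosed : IsClosed A := hclosed x (fun p m hm => (hN p m hm).1)
  have hBclosed : IsClosed B := hclosed y (fun p m hm => (hN p m hm).2)
  -- Urysohn
  obtain ⟨g, hg0, hg1, -⟩ := exists_continuous_zero_one_of_isClosed hAclosed hBclosed hdisj
  have hgu : UniformContinuous ⇑g := h ⇑g g.continuous
  rw [Metric.uniformContinuous_iff] at hgu
  obtain ⟨δ, δpos, hδ⟩ := hgu 1 one_pos
  obtain ⟨k, hk⟩ := exists_nat_gt (1 / δ)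
  have hkd : (1 : ℝ) / (nn k + 1) < δ := by
    have h1 : (k : ℝ) ≤ nn k := by exact_mod_cast hmono.le_apply
    have h2 : (1 : ℝ) / δ < nn k + 1 := by linarith
    rw [div_lt_iff₀ δpos] at h2
    rw [div_lt_iff₀ (by positivity)]
    nlinarith
  have hdistlt : dist (x (nn k)) (y (nn k)) < δ := lt_trans (hxy (nn k)) hkd
  have := hδ hdistlt
  have hgx : g (x (nn k)) = 0 := hg0 ⟨k, rfl⟩
  have hgy : g (y (nn k)) = 1 := hg1 ⟨k, rfl⟩
  rw [hgx, hgy] at this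
  simp [Real.dist_eq] at this

theorem uc_iff_strongUnifCont_on_subsets {X : Type u} [MetricSpace X] :
    List.TFAE
      [∀ f : X → ℝ, Continuous f → UniformContinuous f,
       ∀ (Y : Type v) [MetricSpace Y] (f : X → Y), Continuous f →
         ∀ B : Set X, StrongUnifContOn f B,
       ∀ (Y : Type v) [MetricSpace Y] (f : X → Y), Continuous f →
         ∀ B : Set X, IsClosed B → StrongUnifContOn f B] := by
  tfae_have 1 → 2
  · intro h Y _ f hf B
    have hu := uc_key h f hf
    rw [Metric.uniformContinuous_iff] at hu
    intro ε εpos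
    obtain ⟨δ, δpos, hδ⟩ := hu ε εpos
    exact ⟨δ, δpos, fun a b hab _ => hδ hab⟩
  tfae_have 2 → 3
  · intro h Y _ f hf B _
    exact h Y f hf B
  tfae_have 3 → 1
  · intro h f hf
    have h3 := h (ULift.{v} ℝ) (fun x => ULift.up (f x))
      (continuous_uliftUp.comp hf) Set.univ isClosed_univ
    rw [Metric.uniformContinuous_iff]
    intro ε εpos
    obtain ⟨δ, δpos, hδ⟩ := h3 ε εpos
    refine ⟨δ, δpos, fun a b hab => ?_⟩
    have := hδ a b hab (Or.inl trivial)
    simpa using this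
  tfae_finish
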